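/- There exists a constant Λ > 1 with the following property: for every point x ∈ Ω and all nonnegative real numbers a_0, …, a_q such that a_i = 0 for every 0 ≤ i ≤ q with u_i(x) ≤ −2Λ^{−1}, one has Σ_{i=0}^q a_i ≤ Λ · |Σ_{i=0}^q a_i N_i|, where |·| is the Euclidean norm. -/

import Mathlib

open scoped RealInnerProductSpace

theorem stmt_1 (n q : ℕ) (hn : 3 ≤ n) (hq : 1 ≤ q)
    (u : ℕ → EuclideanSpace ℝ (Fin n) → ℝ)
    (N : ℕ → EuclideanSpace ℝ (Fin n)) (c : ℕ → ℝ)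
    (hN : ∀ k ≤ q, ‖N k‖ = 1)
    (hu : ∀ k ≤ q, ∀ x, u k x = ⟪N k, x⟫ + c k)
    (Ω : Set (EuclideanSpace ℝ (Fin n)))
    (hΩ : Ω = {x | ∀ m ≤ q, u m x ≤ 0})
    (hcomp : IsCompact Ω) (hint : (interior Ω).Nonempty)
    (hA : ∀ k ≤ q, ∃ x, 0 < u k x ∧ ∀ m ≤ q, m ≠ k → u m x ≤ 0)
    (hB : ∀ j k, j < k → k ≤ q → (∃ x ∈ Ω, u j x = 0 ∧ u k x = 0) →
      ⟪N j, N k⟫ ≤ 0) :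
    ∃ Λ : ℝ, 1 < Λ ∧ ∀ x ∈ Ω, ∀ a : ℕ → ℝ,
      (∀ i ≤ q, 0 ≤ a i) →
      (∀ i ≤ q, u i x ≤ -2 * Λ⁻¹ → a i = 0) →
      ∑ i ∈ Finset.range (q + 1), a i ≤
        Λ * ‖∑ i ∈ Finset.range (q + 1), a i • N i‖ := by
  classical
  obtain ⟨y, hy⟩ := hint
  have hyΩ : y ∈ Ω := interior_subset hy
  obtain ⟨r, hr, hball⟩ := Metric.isOpen_iff.mp isOpen_interior y hy
  have hballΩ : Metric.ball y r ⊆ Ω := fun z hz => interior_subset (hball hz)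
  -- interior point has strictly negative constraints
  have hystrict : ∀ i ≤ q, u i y < 0 := by
    intro i hi
    by_contra h
    push_neg at h
    have hmem : y + (r/2) • N i ∈ Ω := by
      apply hballΩ
      simp only [Metric.mem_ball, dist_eq_norm, add_sub_cancel_left, norm_smul,
        Real.norm_eq_abs, hN i hi, mul_one, abs_of_pos (by linarith : (0:ℝ) < r/2)]
      linarith
    have hle : u i (y + (r/2) • N i) ≤ 0 := by
      rw [hΩ] at hmem; exact hmem i hi
    rw [hu i hi, inner_add_right, real_inner_smul_right, real_inner_self_eq_norm_sq,
      hN i hi] at hle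
    rw [hu i hi] at h
    nlinarith
  -- the function φ on the compact set K
  set φ : EuclideanSpace ℝ (Fin n) × (Fin (q+1) → ℝ) → ℝ :=
    fun p => ‖∑ i : Fin (q+1), p.2 i • N i‖ +
      ∑ i : Fin (q+1), p.2 i * (-(⟪N (i:ℕ), p.1⟫ + c (i:ℕ))) with hφ
  have hφcont : Continuous φ := by
    apply Continuous.add
    · exact (continuous_finset_sum _ fun i _ =>
        ((continuous_apply (i : Fin (q+1))).comp continuous_snd).smul
          continuous_const).norm
    · exact continuous_finset_sum _ fun i _ =>
        (((continuous_apply (i : Fin (q+1))).comp continuous_snd).mul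
          (((continuous_const.inner continuous_fst).add continuous_const).neg))
  set K : Set (EuclideanSpace ℝ (Fin n) × (Fin (q+1) → ℝ)) :=
    Ω ×ˢ stdSimplex ℝ (Fin (q+1)) with hK
  have hKcomp : IsCompact K := hcomp.prod (isCompact_stdSimplex _ _)
  have hKne : K.Nonempty := by
    refine ⟨(y, fun i => if i = 0 then 1 else 0), hyΩ, fun i => ?_, ?_⟩
    · dsimp only; split <;> norm_num
    · simp
  -- auxiliary fact: for i : Fin (q+1), ↑i ≤ q
  have hfin : ∀ i : Fin (q+1), (i : ℕ) ≤ q := fun i => Nat.lt_succ_iff.mp i.2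
  -- positivity of φ on K
  have hφpos : ∀ p ∈ K, 0 < φ p := by
    rintro ⟨x, b⟩ ⟨hxΩ, hb⟩
    have huneg : ∀ i : Fin (q+1), u (i:ℕ) x ≤ 0 := by
      intro i; rw [hΩ] at hxΩ; exact hxΩ i (hfin i)
    have hterm : ∀ i : Fin (q+1), 0 ≤ b i * (-(⟪N (i:ℕ), x⟫ + c (i:ℕ))) := by
      intro i
      have := huneg i
      rw [hu (i:ℕ) (hfin i)] at this
      exact mul_nonneg (hb.1 i) (by linarith)
    have hsum2 : 0 ≤ ∑ i : Fin (q+1), b i * (-(⟪N (i:ℕ), x⟫ + c (i:ℕ))) :=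
      Finset.sum_nonneg fun i _ => hterm i
    rcases lt_or_eq_of_le (add_nonneg (norm_nonneg (∑ i : Fin (q+1), b i • N (i:ℕ))) hsum2) with h | h
    · exact h
    exfalso
    -- both parts vanish
    have h0 : ‖∑ i : Fin (q+1), b i • N i‖ = 0 ∧
        ∑ i : Fin (q+1), b i * (-(⟪N (i:ℕ), x⟫ + c (i:ℕ))) = 0 := by
      constructor <;> nlinarith [norm_nonneg (∑ i : Fin (q+1), b i • N i)]
    have hvec : ∑ i : Fin (q+1), b i • N (i:ℕ) = 0 := by
      have h1 := h0.1
      rwa [norm_eq_zero] at h1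
    have hterm0 : ∀ i : Fin (q+1), b i * (-(⟪N (i:ℕ), x⟫ + c (i:ℕ))) = 0 := by
      intro i
      have := (Finset.sum_eq_zero_iff_of_nonneg (fun i _ => hterm i)).mp h0.2
      exact this i (Finset.mem_univ i)
    -- inner product with y - x
    have hinner : ∑ i : Fin (q+1), b i * ⟪N (i:ℕ), y - x⟫ = 0 := by
      have : ⟪∑ i : Fin (q+1), b i • N (i:ℕ), y - x⟫ = (0:ℝ) := by
        rw [hvec, inner_zero_left]
      rw [sum_inner] at this
      rw [← this]
      exact Finset.sum_congr rfl fun i _ => (real_inner_smul_left _ _ _).symm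
    have hexp : ∀ i : Fin (q+1),
        b i * ⟪N (i:ℕ), y - x⟫ = b i * u (i:ℕ) y - b i * u (i:ℕ) x := by
      intro i
      rw [hu (i:ℕ) (hfin i), hu (i:ℕ) (hfin i), inner_sub_right]
      ring
    have hux0 : ∀ i : Fin (q+1), b i * u (i:ℕ) x = 0 := by
      intro i
      have := hterm0 i
      rw [hu (i:ℕ) (hfin i)]
      nlinarith [hterm0 i]
    have hsumy : ∑ i : Fin (q+1), b i * u (i:ℕ) y = 0 := by
      have : ∑ i : Fin (q+1), b i * ⟪N (i:ℕ), y - x⟫ =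
          ∑ i : Fin (q+1), (b i * u (i:ℕ) y - b i * u (i:ℕ) x) :=
        Finset.sum_congr rfl fun i _ => hexp i
      rw [Finset.sum_sub_distrib] at this
      rw [Finset.sum_eq_zero (fun i _ => hux0 i)] at this
      rw [this] at hinner
      linarith [hinner]
    -- but some b j > 0, giving strict negativity
    obtain ⟨j, hj⟩ : ∃ j : Fin (q+1), 0 < b j := by
      by_contra hc
      push_neg at hc
      have : ∑ i : Fin (q+1), b i = 0 :=
        le_antisymm (Finset.sum_nonpos fun i _ => hc i)
          (Finset.sum_nonneg fun i _ => hb.1 i)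
      rw [hb.2] at this; norm_num at this
    have hlt : ∑ i : Fin (q+1), b i * u (i:ℕ) y < 0 := by
      have h1 : ∀ i ∈ Finset.univ, b i * u (i:ℕ) y ≤ (fun _ : Fin (q+1) => (0:ℝ)) i :=
        fun i _ => mul_nonpos_of_nonneg_of_nonpos (hb.1 i) (le_of_lt (hystrict _ (hfin i)))
      have h2 : ∃ i ∈ Finset.univ, b i * u (i:ℕ) y < (fun _ : Fin (q+1) => (0:ℝ)) i :=
        ⟨j, Finset.mem_univ j, mul_neg_of_pos_of_neg hj (hystrict _ (hfin j))⟩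
      have := Finset.sum_lt_sum h1 h2
      simpa using this
    linarith [hsumy, hlt]
  -- minimum of φ on K
  obtain ⟨p₀, hp₀K, hp₀min⟩ := hKcomp.exists_isMinOn hKne hφcont.continuousOn
  set ε : ℝ := φ p₀ with hε
  have hεpos : 0 < ε := hφpos p₀ hp₀K
  refine ⟨max 2 (3/ε), lt_of_lt_of_le one_lt_two (le_max_left _ _), ?_⟩
  set Λ : ℝ := max 2 (3/ε) with hΛ
  have hΛpos : 0 < Λ := lt_of_lt_of_le two_pos (le_max_left _ _)
  have hΛ3 : 3 / Λ ≤ ε := by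
    rw [div_le_iff₀ hΛpos]
    have : 3 / ε ≤ Λ := le_max_right _ _
    rw [div_le_iff₀ hεpos] at this
    linarith
  intro x hx a ha hsupp
  set T : ℝ := ∑ i ∈ Finset.range (q+1), a i with hT
  have hTnn : 0 ≤ T :=
    Finset.sum_nonneg fun i hi => ha i (Nat.lt_succ_iff.mp (Finset.mem_range.mp hi))
  rcases eq_or_lt_of_le hTnn with hT0 | hTpos
  · rw [← hT0]
    positivity
  -- normalize
  set b : Fin (q+1) → ℝ := fun i => a (i:ℕ) / T with hb
  have hbmem : b ∈ stdSimplex ℝ (Fin (q+1)) := by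
    constructor
    · intro i
      exact div_nonneg (ha _ (hfin i)) hTnn
    · rw [← Finset.sum_div]
      rw [show ∑ i : Fin (q+1), a (i:ℕ) = T by
        rw [hT, ← Fin.sum_univ_eq_sum_range]]
      exact div_self (ne_of_gt hTpos)
  have hxbK : (x, b) ∈ K := ⟨hx, hbmem⟩
  have hmin := hp₀min hxbK
  -- bound the second sum
  have hsum2le : ∑ i : Fin (q+1), b i * (-(⟪N (i:ℕ), x⟫ + c (i:ℕ))) ≤ 2 / Λ := by
    have hle : ∀ i : Fin (q+1), b i * (-(⟪N (i:ℕ), x⟫ + c (i:ℕ))) ≤ b i * (2/Λ) := by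
      intro i
      rcases eq_or_ne (a (i:ℕ)) 0 with h0 | h0
      · simp [hb, h0]
      · have hgt : -2 * Λ⁻¹ < u (i:ℕ) x := by
          by_contra hc
          push_neg at hc
          exact h0 (hsupp (i:ℕ) (hfin i) hc)
        rw [hu (i:ℕ) (hfin i)] at hgt
        have hbnn : 0 ≤ b i := hbmem.1 i
        have : -(⟪N (i:ℕ), x⟫ + c (i:ℕ)) ≤ 2/Λ := by
          rw [div_eq_mul_inv]; linarith
        exact mul_le_mul_of_nonneg_left this hbnn
    calc ∑ i : Fin (q+1), b i * (-(⟪N (i:ℕ), x⟫ + c (i:ℕ)))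
        ≤ ∑ i : Fin (q+1), b i * (2/Λ) := Finset.sum_le_sum fun i _ => hle i
      _ = (∑ i : Fin (q+1), b i) * (2/Λ) := by rw [← Finset.sum_mul]
      _ = 2/Λ := by rw [hbmem.2, one_mul]
  have hnormb : 1/Λ ≤ ‖∑ i : Fin (q+1), b i • N (i:ℕ)‖ := by
    have : ε ≤ ‖∑ i : Fin (q+1), b i • N (i:ℕ)‖ +
        ∑ i : Fin (q+1), b i * (-(⟪N (i:ℕ), x⟫ + c (i:ℕ))) := hmin
    have h3 : (3:ℝ)/Λ - 2/Λ = 1/Λ := by ring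
    clear_value φ K ε Λ T b
    linarith [this, hsum2le, hΛ3, h3]
  -- relate the sums
  have hsumrel : ∑ i ∈ Finset.range (q+1), a i • N i =
      T • ∑ i : Fin (q+1), b i • N (i:ℕ) := by
    rw [Finset.smul_sum, ← Fin.sum_univ_eq_sum_range (fun i => a i • N i)]
    refine Finset.sum_congr rfl fun i _ => ?_
    rw [smul_smul, hb]
    congr 1
    field_simp
  rw [hsumrel, norm_smul, Real.norm_eq_abs, abs_of_pos hTpos]
  calc T = Λ * (T * (1/Λ)) := by field_simp
    _ ≤ Λ * (T * ‖∑ i : Fin (q+1), b i • N (i:ℕ)‖) := by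
        apply mul_le_mul_of_nonneg_left _ (le_of_lt hΛpos)
        exact mul_le_mul_of_nonneg_left hnormb (le_of_lt hTpos)
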